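/- Lemma 2: for every e ∈ [0, ΔE], the Hermitian matrix v(e) has the same spectrum (set of eigenvalues) as V; consequently ‖v(e)‖ = ‖V‖ in operator norm. -/

import Mathlib

open scoped ComplexOrder Classical

/-- The operator norm of a complex matrix. -/
noncomputable def opNorm {n : Type*} [Fintype n] [DecidableEq n] (A : Matrix n n ℂ) : ℝ :=
  ‖Matrix.toEuclideanCLM (𝕜 := ℂ) A‖

/-- The function `h_j(e)`: equals `1/2` if `⌊(E_j − e)/ΔE⌋` is odd and `−1/2` if it is even. -/
noncomputable def hj {N : ℕ} (E : Fin N → ℝ) (ΔE : ℝ) (j : Fin N) (x : ℝ) : ℝ :=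
  if Odd ⌊(E j - x) / ΔE⌋ then 1 / 2 else -(1 / 2)

/-- The matrix `v(e) = Σ_{j,m} v_{jm}(e) |E_j⟩⟨E_m|` where `v_{jm}(e) = ± V_{jm}` according
to the sign of `(j−m)(h_j(e)−h_m(e))`, with `V_{jm} = ⟨E_j|V|E_m⟩`. -/
noncomputable def vMat {N : ℕ} (e : Fin N → EuclideanSpace ℂ (Fin N)) (E : Fin N → ℝ)
    (V : Matrix (Fin N) (Fin N) ℂ) (ΔE x : ℝ) : Matrix (Fin N) (Fin N) ℂ :=
  ∑ j : Fin N, ∑ m : Fin N,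
    (if 0 ≤ ((j : ℝ) - (m : ℝ)) * (hj E ΔE j x - hj E ΔE m x)
      then (inner ℂ (e j) (Matrix.toEuclideanCLM (𝕜 := ℂ) V (e m)) : ℂ)
      else -(inner ℂ (e j) (Matrix.toEuclideanCLM (𝕜 := ℂ) V (e m)) : ℂ)) •
    Matrix.of fun a b => e j a * (starRingEnd ℂ) (e m b)

/-- Sign function: `+1` on residues `0, 1 (mod 4)`, `−1` on residues `2, 3 (mod 4)`. -/
noncomputable def sC (k : ℤ) : ℂ := if k % 4 = 0 ∨ k % 4 = 1 then 1 else -1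

lemma sC_sq (k : ℤ) : sC k * sC k = 1 := by unfold sC; split <;> ring

lemma sC_star (k : ℤ) : starRingEnd ℂ (sC k) = sC k := by unfold sC; split <;> simp

lemma sC_succ_even (k : ℤ) (h : k % 2 = 0) : sC (k + 1) * sC k = 1 := by
  have h4 : k % 4 = 0 ∨ k % 4 = 2 := by omega
  rcases h4 with h4 | h4 <;>
  · have h4' : (k + 1) % 4 = k % 4 + 1 := by omega
    simp [sC, h4, h4']

lemma sC_succ_odd (k : ℤ) (h : k % 2 = 1) : sC (k + 1) * sC k = -1 := by
  have h4 : k % 4 = 1 ∨ k % 4 = 3 := by omega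
  rcases h4 with h4 | h4
  · have h4' : (k + 1) % 4 = 2 := by omega
    simp [sC, h4, h4']
  · have h4' : (k + 1) % 4 = 0 := by omega
    simp [sC, h4, h4']

open Matrix in
open scoped Matrix.Norms.L2Operator in
/-- Lemma 2: for every `e ∈ [0, ΔE]`, the matrix `v(e)` has the same spectrum as `V`;
consequently it has the same operator norm as `V`. -/
theorem vOp_same_spectrum_and_norm {N : ℕ} (hN : 1 ≤ N)
    (H V : Matrix (Fin N) (Fin N) ℂ) (hH : H.IsHermitian) (hV : V.IsHermitian)
    (e : Fin N → EuclideanSpace ℂ (Fin N)) (horth : Orthonormal ℂ e)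
    (hspan : Submodule.span ℂ (Set.range e) = ⊤)
    (E : Fin N → ℝ) (hE : Monotone E)
    (heig : ∀ j, Matrix.toEuclideanCLM (𝕜 := ℂ) H (e j) = (E j : ℂ) • e j)
    (ΔE : ℝ) (hΔE : 0 < ΔE)
    (hgap : ∀ j m, |E j - E m| > ΔE →
      (inner ℂ (e j) (Matrix.toEuclideanCLM (𝕜 := ℂ) V (e m)) : ℂ) = 0)
    (x : ℝ) (hx0 : 0 ≤ x) (hxΔ : x ≤ ΔE) :
    spectrum ℂ (vMat e E V ΔE x) = spectrum ℂ V ∧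
      opNorm (vMat e E V ΔE x) = opNorm V := by
  classical
  set s : Fin N → ℂ := fun j => sC ⌊(E j - x) / ΔE⌋ with hs
  set P : Matrix (Fin N) (Fin N) ℂ := Matrix.of (fun a j => e j a) with hPdef
  set D : Matrix (Fin N) (Fin N) ℂ := Matrix.diagonal s with hDdef
  -- orthonormality of columns
  have horth' : ∀ j m, ∑ a, starRingEnd ℂ (e j a) * e m a = if j = m then 1 else 0 := by
    intro j m
    have := orthonormal_iff_ite.mp horth j m
    simpa [PiLp.inner_apply, RCLike.inner_apply, mul_comm] using this
  have hPP : Pᴴ * P = 1 := by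
    ext j m
    simp only [Matrix.mul_apply, Matrix.conjTranspose_apply, hPdef, Matrix.of_apply,
      Matrix.one_apply, ← starRingEnd_apply]
    exact horth' j m
  have hPP' : P * Pᴴ = 1 := mul_eq_one_comm.mp hPP
  -- matrix elements of V in the eigenbasis
  have happ : ∀ (A : Matrix (Fin N) (Fin N) ℂ) (v : EuclideanSpace ℂ (Fin N)) (a : Fin N),
      (Matrix.toEuclideanCLM (𝕜 := ℂ) A v) a = ∑ b, A a b * v b := fun _ _ _ => rfl
  have hW : ∀ j m, (inner ℂ (e j) (Matrix.toEuclideanCLM (𝕜 := ℂ) V (e m)) : ℂ)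
      = (Pᴴ * V * P) j m := by
    intro j m
    simp only [PiLp.inner_apply, RCLike.inner_apply, happ, Matrix.mul_apply,
      Matrix.conjTranspose_apply, hPdef, Matrix.of_apply, ← starRingEnd_apply,
      Finset.mul_sum, Finset.sum_mul]
    rw [Finset.sum_comm]
    refine Finset.sum_congr rfl fun a _ => Finset.sum_congr rfl fun b _ => ?_
    ring
  -- the key combinatorial identity for coefficients
  have hcoef : ∀ j m : Fin N,
      (if 0 ≤ ((j : ℝ) - (m : ℝ)) * (hj E ΔE j x - hj E ΔE m x)
        then (inner ℂ (e j) (Matrix.toEuclideanCLM (𝕜 := ℂ) V (e m)) : ℂ)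
        else -(inner ℂ (e j) (Matrix.toEuclideanCLM (𝕜 := ℂ) V (e m)) : ℂ))
      = s j * (inner ℂ (e j) (Matrix.toEuclideanCLM (𝕜 := ℂ) V (e m)) : ℂ) * s m := by
    intro j m
    by_cases h0 : (inner ℂ (e j) (Matrix.toEuclideanCLM (𝕜 := ℂ) V (e m)) : ℂ) = 0
    · rw [h0]; split <;> simp
    · have hle : |E j - E m| ≤ ΔE := le_of_not_gt fun h => h0 (hgap j m h)
      have habs := abs_le.mp hle
      have hub : ∀ y z : ℝ, y - z ≤ ΔE → (y - x) / ΔE ≤ (z - x) / ΔE + 1 := by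
        intro y z hyz
        have h1 : (y - x) / ΔE ≤ ((z - x) + ΔE) / ΔE := by gcongr <;> linarith
        calc (y - x) / ΔE ≤ ((z - x) + ΔE) / ΔE := h1
          _ = (z - x) / ΔE + 1 := by field_simp
      have hf1 : ⌊(E j - x) / ΔE⌋ ≤ ⌊(E m - x) / ΔE⌋ + 1 := by
        have := Int.floor_le_floor (R := ℝ) (hub (E j) (E m) habs.2)
        simpa [Int.floor_add_one] using this
      have hf2 : ⌊(E m - x) / ΔE⌋ ≤ ⌊(E j - x) / ΔE⌋ + 1 := by
        have := Int.floor_le_floor (R := ℝ) (hub (E m) (E j) (by linarith [habs.1]))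
        simpa [Int.floor_add_one] using this
      unfold hj
      simp only [hs]
      set fj : ℤ := ⌊(E j - x) / ΔE⌋ with hfjdef
      set fm : ℤ := ⌊(E m - x) / ΔE⌋ with hfmdef
      set Wc : ℂ := (inner ℂ (e j) (Matrix.toEuclideanCLM (𝕜 := ℂ) V (e m)) : ℂ) with hWc
      have hEmono : ∀ {p q : Fin N}, E q < E p → (0:ℝ) < (p : ℝ) - (q : ℝ) := by
        intro p q hpq
        have hqp : q < p := by
          by_contra hcon
          push_neg at hcon
          exact absurd (hE hcon) (not_le.mpr hpq)
        have : (q : ℕ) < (p : ℕ) := hqp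
        have : ((q : ℕ) : ℝ) < ((p : ℕ) : ℝ) := by exact_mod_cast this
        linarith
      have hcase : fj = fm ∨ fj = fm + 1 ∨ fm = fj + 1 := by omega
      rcases hcase with heq | heq | heq
      · rw [heq]
        rw [if_pos (by simp)]
        have h2 := sC_sq fm
        linear_combination -Wc * h2
      · -- fj = fm + 1, so E m < E j and m < j
        have hgt : E m < E j := by
          have h1 : ((fj : ℝ)) ≤ (E j - x) / ΔE := Int.floor_le _
          have h2 : (E m - x) / ΔE < (fm : ℝ) + 1 := Int.lt_floor_add_one _
          have h3 : (E m - x) / ΔE < (E j - x) / ΔE := by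
            have : ((fm : ℝ)) + 1 = (fj : ℝ) := by exact_mod_cast congrArg Int.cast heq.symm
            linarith
          have := (div_lt_div_iff_of_pos_right hΔE).mp h3
          linarith
        have hpos : (0:ℝ) < (j : ℝ) - (m : ℝ) := hEmono hgt
        rcases Int.even_or_odd fm with hev | hod
        · have hOm : ¬ Odd fm := Int.not_odd_iff_even.mpr hev
          have hOj : Odd fj := by rw [heq]; exact Even.add_one hev
          rw [if_pos hOj, if_neg hOm]
          rw [if_pos (by nlinarith)]
          have h2 := sC_succ_even fm (Int.even_iff.mp hev)
          rw [heq]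
          linear_combination -Wc * h2
        · have hOm : Odd fm := hod
          have hOj : ¬ Odd fj := by
            rw [heq]; exact Int.not_odd_iff_even.mpr (Odd.add_one hod)
          rw [if_neg hOj, if_pos hOm]
          rw [if_neg (by push_neg; nlinarith)]
          have h2 := sC_succ_odd fm (Int.odd_iff.mp hod)
          rw [heq]
          linear_combination -Wc * h2
      · -- fm = fj + 1, so E j < E m and j < m
        have hgt : E j < E m := by
          have h1 : ((fm : ℝ)) ≤ (E m - x) / ΔE := Int.floor_le _
          have h2 : (E j - x) / ΔE < (fj : ℝ) + 1 := Int.lt_floor_add_one _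
          have h3 : (E j - x) / ΔE < (E m - x) / ΔE := by
            have : ((fj : ℝ)) + 1 = (fm : ℝ) := by exact_mod_cast congrArg Int.cast heq.symm
            linarith
          have := (div_lt_div_iff_of_pos_right hΔE).mp h3
          linarith
        have hneg : (j : ℝ) - (m : ℝ) < 0 := by
          have := hEmono hgt; linarith
        rcases Int.even_or_odd fj with hev | hod
        · have hOj : ¬ Odd fj := Int.not_odd_iff_even.mpr hev
          have hOm : Odd fm := by rw [heq]; exact Even.add_one hev
          rw [if_neg hOj, if_pos hOm]
          rw [if_pos (by nlinarith)]
          have h2 := sC_succ_even fj (Int.even_iff.mp hev)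
          rw [heq]
          linear_combination -Wc * h2
        · have hOj : Odd fj := hod
          have hOm : ¬ Odd fm := by
            rw [heq]; exact Int.not_odd_iff_even.mpr (Odd.add_one hod)
          rw [if_pos hOj, if_neg hOm]
          rw [if_neg (by push_neg; nlinarith)]
          have h2 := sC_succ_odd fj (Int.odd_iff.mp hod)
          rw [heq]
          linear_combination -Wc * h2
  -- conjugation expansion
  have hsum : ∀ C : Matrix (Fin N) (Fin N) ℂ,
      P * C * Pᴴ = ∑ j : Fin N, ∑ m : Fin N,
        C j m • Matrix.of (fun a b => e j a * (starRingEnd ℂ) (e m b)) := by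
    intro C
    ext a b
    simp only [Matrix.sum_apply, Matrix.smul_apply, Matrix.of_apply, smul_eq_mul,
      Matrix.mul_apply, Matrix.conjTranspose_apply, hPdef, ← starRingEnd_apply,
      Finset.sum_mul, Finset.mul_sum]
    rw [Finset.sum_comm]
    refine Finset.sum_congr rfl fun j _ => Finset.sum_congr rfl fun m _ => ?_
    ring
  -- the structural identity
  have hvMat : vMat e E V ΔE x = P * (D * (Pᴴ * V * P) * D) * Pᴴ := by
    rw [hsum]
    unfold vMat
    refine Finset.sum_congr rfl fun j _ => Finset.sum_congr rfl fun m _ => ?_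
    congr 1
    have hd : (D * (Pᴴ * V * P) * D) j m = s j * ((Pᴴ * V * P) j m) * s m := by
      rw [Matrix.mul_diagonal, Matrix.diagonal_mul]
    rw [hd, ← hW j m]
    exact hcoef j m
  set U : Matrix (Fin N) (Fin N) ℂ := P * D * Pᴴ with hUdef
  have hDD : D * D = 1 := by
    rw [hDdef, Matrix.diagonal_mul_diagonal]
    have : (fun j => s j * s j) = fun _ => (1 : ℂ) := funext fun j => sC_sq _
    rw [this, Matrix.diagonal_one]
  have hDstar : Dᴴ = D := by
    have hsstar : star s = s := by
      funext j
      rw [Pi.star_apply, ← starRingEnd_apply]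
      exact sC_star _
    rw [hDdef, Matrix.diagonal_conjTranspose, hsstar]
  have hUstar : Uᴴ = U := by
    rw [hUdef]
    simp only [Matrix.conjTranspose_mul, Matrix.conjTranspose_conjTranspose, hDstar]
    rw [Matrix.mul_assoc]
  have hUU : U * U = 1 := by
    rw [hUdef]
    calc P * D * Pᴴ * (P * D * Pᴴ) = P * D * (Pᴴ * P) * D * Pᴴ := by
          simp only [Matrix.mul_assoc]
      _ = P * (D * D) * Pᴴ := by rw [hPP]; simp only [Matrix.mul_one, Matrix.mul_assoc]
      _ = P * Pᴴ := by rw [hDD, Matrix.mul_one]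
      _ = 1 := hPP'
  have hconj : vMat e E V ΔE x = U * V * U := by
    rw [hvMat, hUdef]
    simp only [Matrix.mul_assoc]
  have hUmem : U ∈ unitary (Matrix (Fin N) (Fin N) ℂ) := by
    rw [Unitary.mem_iff]
    constructor
    · rw [Matrix.star_eq_conjTranspose, hUstar, hUU]
    · rw [Matrix.star_eq_conjTranspose, hUstar, hUU]
  have hu : ∀ (a : Matrix (Fin N) (Fin N) ℂ), spectrum ℂ (U * a * U) = spectrum ℂ a := by
    intro a
    have := spectrum.units_conjugate (R := ℂ) (a := a) (u := ⟨U, U, hUU, hUU⟩)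
    simpa using this
  constructor
  · rw [hconj]
    exact hu V
  · unfold opNorm
    rw [← Matrix.cstar_norm_def, ← Matrix.cstar_norm_def, hconj]
    calc ‖U * V * U‖ = ‖U * (V * U)‖ := by rw [mul_assoc]
      _ = ‖V * U‖ := CStarRing.norm_mem_unitary_mul _ hUmem
      _ = ‖V‖ := CStarRing.norm_mul_mem_unitary _ hUmem
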